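/- Let f: K → ℝ be a discrete Morse function on a connected finite simplicial complex K, and let v₁ be a critical vertex that is not the global minimum of f restricted to vertices. If the sublevel complex K^{f(v₁)} is disconnected, then f has a critical edge e with f(e) > f(v₁). -/

import Mathlib

open Finset

noncomputable section

attribute [local instance] Classical.propDecidable

/-- A finite abstract simplicial complex on vertex type `V`. -/
structure SComplex (V : Type*) [LinearOrder V] where
  cells : Finset (Finset V)
  nonempty_of_mem : ∀ σ ∈ cells, σ.Nonempty
  down_closed : ∀ σ ∈ cells, ∀ τ ⊆ σ, τ.Nonempty → τ ∈ cells

variable {V : Type*} [LinearOrder V]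

/-- `U(σ)`: immediate cofaces of `σ` in `K` with not-larger `f`-value. -/
def Uset (f : Finset V → ℝ) (K : SComplex V) (σ : Finset V) : Finset (Finset V) :=
  K.cells.filter fun τ => σ ⊂ τ ∧ τ.card = σ.card + 1 ∧ f τ ≤ f σ

/-- `L(σ)`: immediate faces of `σ` in `K` with not-smaller `f`-value. -/
def Lset (f : Finset V → ℝ) (K : SComplex V) (σ : Finset V) : Finset (Finset V) :=
  K.cells.filter fun γ => γ ⊂ σ ∧ σ.card = γ.card + 1 ∧ f σ ≤ f γ

/-- `f` is a discrete Morse function on `K`. -/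
def IsDMF (f : Finset V → ℝ) (K : SComplex V) : Prop :=
  ∀ σ ∈ K.cells, (Uset f K σ).card ≤ 1 ∧ (Lset f K σ).card ≤ 1

/-- A critical cell of `f`. -/
def IsCriticalCell (f : Finset V → ℝ) (K : SComplex V) (σ : Finset V) : Prop :=
  σ ∈ K.cells ∧ Uset f K σ = ∅ ∧ Lset f K σ = ∅

def IsCriticalValue (f : Finset V → ℝ) (K : SComplex V) (c : ℝ) : Prop :=
  ∃ σ, IsCriticalCell f K σ ∧ f σ = c

def IsRegularValue (f : Finset V → ℝ) (K : SComplex V) (a : ℝ) : Prop :=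
  ¬ IsCriticalValue f K a

/-- `{σ < τ}` is a pair of the gradient vector field `V = -∇f`. -/
def GradPair (f : Finset V → ℝ) (K : SComplex V) (σ τ : Finset V) : Prop :=
  σ ∈ K.cells ∧ τ ∈ K.cells ∧ σ ⊂ τ ∧ τ.card = σ.card + 1 ∧ f τ ≤ f σ

/-- The sublevel (level sub-)complex `K^a`: all cells with `f`-value ≤ a and their faces. -/
def subcx (f : Finset V → ℝ) (K : SComplex V) (a : ℝ) : Finset (Finset V) :=
  K.cells.filter fun σ => ∃ τ ∈ K.cells, σ ⊆ τ ∧ f τ ≤ a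

/-- The sublevel set `L^a = {σ ∈ K : f σ ≤ a}` (no closure). -/
def sublevelSet (f : Finset V → ℝ) (K : SComplex V) (a : ℝ) : Finset (Finset V) :=
  K.cells.filter fun σ => f σ ≤ a

/-- One elementary collapse: remove a free pair `σ < τ`. -/
def ElemCollapse (C D : Finset (Finset V)) : Prop :=
  ∃ σ τ : Finset V, σ ∈ C ∧ τ ∈ C ∧ σ ⊂ τ ∧ τ.card = σ.card + 1 ∧
    (∀ ρ ∈ C, σ ⊂ ρ → ρ = τ) ∧ D = (C.erase σ).erase τ

/-- `C` collapses onto `D`. -/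
def Collapses (C D : Finset (Finset V)) : Prop :=
  Relation.ReflTransGen ElemCollapse C D

/-- `L` is a subcomplex of `K`. -/
def IsSubcomplexOf (L : Finset (Finset V)) (K : SComplex V) : Prop :=
  L ⊆ K.cells ∧ ∀ σ ∈ L, ∀ τ ⊆ σ, τ.Nonempty → τ ∈ L

/-- A complex (given as its finset of cells) is collapsible: it collapses to a vertex. -/
def CollapsibleCx (L : Finset (Finset V)) : Prop :=
  ∃ v : V, Collapses L {({v} : Finset V)}

/-- Boundary of an oriented simplex (vertices ordered by the linear order on `V`). -/
noncomputable def bdryCell (σ : Finset V) : Finset V →₀ ℤ :=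
  ∑ v ∈ σ, Finsupp.single (σ.erase v) ((-1 : ℤ) ^ ((σ.filter fun w => w < v).card))

/-- Boundary operator on chains. -/
noncomputable def bdry (c : Finset V →₀ ℤ) : Finset V →₀ ℤ :=
  c.sum fun σ n => n • bdryCell σ

/-- The gradient `V` as a chain map: `V(σ) = -⟨∂τ, σ⟩ τ` when `{σ < τ} ∈ V`, else 0. -/
noncomputable def gradOp (f : Finset V → ℝ) (K : SComplex V) (c : Finset V →₀ ℤ) :
    Finset V →₀ ℤ :=
  c.sum fun σ n => ∑ τ ∈ Uset f K σ, Finsupp.single τ (-(n * bdryCell τ σ))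

/-- The discrete flow operator `φ = Id + ∂V + V∂`. -/
noncomputable def flow (f : Finset V → ℝ) (K : SComplex V) (c : Finset V →₀ ℤ) :
    Finset V →₀ ℤ :=
  c + bdry (gradOp f K c) + gradOp f K (bdry c)

noncomputable def flowCell (f : Finset V → ℝ) (K : SComplex V) (σ : Finset V) :
    Finset V →₀ ℤ :=
  flow f K (Finsupp.single σ 1)

/-- `Φ(A)`: union of the supports of `φ(σ)` over `σ ∈ A`. -/
noncomputable def Phi (f : Finset V → ℝ) (K : SComplex V) (A : Finset (Finset V)) :
    Finset (Finset V) :=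
  A.biUnion fun σ => (flowCell f K σ).support

/-- `Φ̄(A)`: the subcomplex generated by `Φ(A)`. -/
noncomputable def PhiBar (f : Finset V → ℝ) (K : SComplex V) (A : Finset (Finset V)) :
    Finset (Finset V) :=
  (Phi f K A).biUnion fun σ => σ.powerset.filter fun τ => τ.Nonempty

/-- Min-max data `(𝓗, 𝓢)` for `f` on `K`. -/
def IsMinMaxData (f : Finset V → ℝ) (K : SComplex V)
    (H : Set (Finset (Finset V) → Finset (Finset V)))
    (S : Set (Finset (Finset V))) : Prop :=
  (∀ a : ℝ, IsRegularValue f K a →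
    ∃ ε > (0 : ℝ), ∃ h ∈ H, h (sublevelSet f K (a + ε)) ⊆ sublevelSet f K (a - ε)) ∧
  ∀ h ∈ H, ∀ s ∈ S, h s ∈ S

/-- `x` is the maximum value of `f` on the finite set `s`. -/
def IsMaxValOn (f : Finset V → ℝ) (s : Finset (Finset V)) (x : ℝ) : Prop :=
  (∃ σ ∈ s, f σ = x) ∧ ∀ σ ∈ s, f σ ≤ x

/-- Geometric precategory: `L` is covered by `m+1` subcomplexes collapsible in `K`. -/
def precatLE (K : SComplex V) (L : Finset (Finset V)) (m : ℕ) : Prop :=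
  ∃ U : Fin (m + 1) → Finset (Finset V),
    (∀ i, IsSubcomplexOf (U i) K ∧ CollapsibleCx (U i)) ∧ ∀ σ ∈ L, ∃ i, σ ∈ U i

/-- Discrete geometric category of `L` in `K`. -/
noncomputable def dgcat (K : SComplex V) (L : Finset (Finset V)) : ℕ :=
  sInf {m | ∃ L', Collapses L L' ∧ precatLE K L' m}

/-- `σ` lies in the basin `A(v₀)`: some subcomplex of `K` containing `σ` collapses to `v₀`. -/
def InBasin (K : SComplex V) (v₀ : V) (σ : Finset V) : Prop :=
  ∃ L : Finset (Finset V), IsSubcomplexOf L K ∧ Collapses L {({v₀} : Finset V)} ∧ σ ∈ L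

/-- Edge-path connectivity of a complex given by its finset of cells. -/
def ConnectedIn (C : Finset (Finset V)) : Prop :=
  ∀ u v : V, ({u} : Finset V) ∈ C → ({v} : Finset V) ∈ C →
    ∃ (n : ℕ) (p : ℕ → V), p 0 = u ∧ p n = v ∧ ∀ i < n, ({p i, p (i + 1)} : Finset V) ∈ C

/-- Admissible edge path from critical vertex `v₁` ending in the basin of `v₀`. -/
def IsAdmissiblePath (f : Finset V → ℝ) (K : SComplex V) (v₀ v₁ : V)
    (E : Finset (Finset V)) : Prop :=
  ∃ (r : ℕ) (u : ℕ → V), 1 ≤ r ∧ u 0 = v₁ ∧ InBasin K v₀ ({u r} : Finset V) ∧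
    (∀ i < r, u i ≠ u (i + 1) ∧ ({u i, u (i + 1)} : Finset V) ∈ K.cells) ∧
    (∀ i ≤ r, IsCriticalCell f K ({u i} : Finset V) → u i = v₀ ∨ u i = v₁) ∧
    (∀ j, 1 ≤ j → j ≤ r → InBasin K v₀ ({u j} : Finset V) →
      ∀ i, j ≤ i → i < r →
        f ({u i, u (i + 1)} : Finset V) < f ({u (i - 1), u i} : Finset V)) ∧
    E = insert ({v₁} : Finset V)
      ((Finset.range r).image fun i => ({u i, u (i + 1)} : Finset V))

/-- The family `Γ_k` of the discrete Lusternik–Schnirelmann argument. -/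
def GammaFam (f : Finset V → ℝ) (K : SComplex V) (k : ℕ) : Set (Finset (Finset V)) :=
  {L | ∃ a : ℝ, Collapses (subcx f K a) L ∧ k - 1 ≤ dgcat K (subcx f K a)}

section Stmt19Aux

attribute [-instance] LinearOrder.toDecidableEq

/-- One edge step in a complex given by its finset of cells. -/
def EStep (C : Finset (Finset V)) (x y : V) : Prop := ({x, y} : Finset V) ∈ C

lemma conn_map {C D : Finset (Finset V)} (φ : V → V)
    (h : ∀ x y, EStep C x y → Relation.ReflTransGen (EStep D) (φ x) (φ y)) {u v : V}
    (hc : Relation.ReflTransGen (EStep C) u v) :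
    Relation.ReflTransGen (EStep D) (φ u) (φ v) := by
  induction hc with
  | refl => exact .refl
  | tail _ hstep ih => exact ih.trans (h _ _ hstep)

lemma conn_of_path {C : Finset (Finset V)} :
    ∀ (n : ℕ) (p : ℕ → V), (∀ i < n, ({p i, p (i + 1)} : Finset V) ∈ C) →
      Relation.ReflTransGen (EStep C) (p 0) (p n) := by
  intro n
  induction n with
  | zero => intro p _; exact .refl
  | succ n ih =>
      intro p hp
      exact (ih p (fun i hi => hp i (by omega))).tail (hp n (by omega))

lemma path_of_conn {C : Finset (Finset V)} {u v : V}
    (h : Relation.ReflTransGen (EStep C) u v) :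
    ∃ (n : ℕ) (p : ℕ → V), p 0 = u ∧ p n = v ∧ ∀ i < n, ({p i, p (i + 1)} : Finset V) ∈ C := by
  induction h with
  | refl => exact ⟨0, fun _ => u, rfl, rfl, by omega⟩
  | @tail b c hub hbc ih =>
      obtain ⟨n, p, h0, hn, hp⟩ := ih
      refine ⟨n + 1, fun i => if i ≤ n then p i else c, by simp [h0], by simp, ?_⟩
      intro i hi
      rcases lt_or_eq_of_le (Nat.lt_succ_iff.mp hi) with hlt | heq
      · simpa [Nat.le_of_lt hlt, Nat.succ_le_of_lt hlt] using hp i hlt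
      · subst heq
        simpa [hn, EStep] using hbc

lemma mem_subcx {f : Finset V → ℝ} {K : SComplex V} {a : ℝ} {σ : Finset V} :
    σ ∈ subcx f K a ↔ σ ∈ K.cells ∧ ∃ τ ∈ K.cells, σ ⊆ τ ∧ f τ ≤ a :=
  Finset.mem_filter

lemma subcx_mono {f : Finset V → ℝ} {K : SComplex V} {a b : ℝ} (hab : a ≤ b) :
    subcx f K a ⊆ subcx f K b := by
  intro σ hσ
  obtain ⟨hσK, τ, hτK, hsub, hle⟩ := mem_subcx.mp hσ
  exact mem_subcx.mpr ⟨hσK, τ, hτK, hsub, hle.trans hab⟩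

lemma subcx_down {f : Finset V → ℝ} {K : SComplex V} {a : ℝ} {σ τ : Finset V}
    (hσ : σ ∈ subcx f K a) (hτσ : τ ⊆ σ) (hτ : τ.Nonempty) : τ ∈ subcx f K a := by
  obtain ⟨hσK, ν, hνK, hsub, hle⟩ := mem_subcx.mp hσ
  exact mem_subcx.mpr ⟨K.down_closed σ hσK τ hτσ hτ, ν, hνK, hτσ.trans hsub, hle⟩

/-- If `τ ∈ U(σ)`, then every proper coface of `σ` has `f`-value at least `f τ`. -/
lemma uset_min {f : Finset V → ℝ} {K : SComplex V} (hf : IsDMF f K) {σ τ : Finset V}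
    (hσK : σ ∈ K.cells) (hτ : τ ∈ Uset f K σ) : ∀ ρ ∈ K.cells, σ ⊂ ρ → f τ ≤ f ρ := by
  obtain ⟨hτK, hτmem⟩ := Finset.mem_filter.mp hτ
  obtain ⟨hss, hcard, hle⟩ := hτmem
  suffices h : ∀ n ρ, ρ.card = n → ρ ∈ K.cells → σ ⊂ ρ → f τ ≤ f ρ by
    intro ρ hρ hssρ; exact h ρ.card ρ rfl hρ hssρ
  intro n
  induction n using Nat.strong_induction_on with
  | _ n IH =>
    intro ρ hcardρ hρK hssρ
    have hσρ : σ.card < ρ.card := Finset.card_lt_card hssρ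
    by_cases hc1 : ρ.card = σ.card + 1
    · by_cases hle2 : f ρ ≤ f σ
      · have hρU : ρ ∈ Uset f K σ :=
          Finset.mem_filter.mpr ⟨hρK, hssρ, hc1, hle2⟩
        have h1 : (Uset f K σ).card ≤ 1 := (hf σ hσK).1
        have : ρ = τ := Finset.card_le_one.mp h1 _ hρU _ hτ
        exact le_of_eq (by rw [this])
      · exact hle.trans (le_of_lt (not_le.mp hle2))
    · have h2 : σ.card + 2 ≤ ρ.card := by omega
      by_contra hlt
      have hlt : f ρ < f τ := not_le.mp hlt
      have hsd : 2 ≤ (ρ \ σ).card := by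
        rw [Finset.card_sdiff_of_subset hssρ.subset]; omega
      obtain ⟨z₁, hz₁, z₂, hz₂, hz12⟩ := Finset.one_lt_card.mp hsd
      have key : ∀ z ∈ ρ \ σ, ρ.erase z ∈ Lset f K ρ := by
        intro z hz
        obtain ⟨hzρ, hzσ⟩ := Finset.mem_sdiff.mp hz
        have hsubγ : σ ⊆ ρ.erase z := Finset.subset_erase.mpr ⟨hssρ.subset, hzσ⟩
        have hγcard : (ρ.erase z).card = ρ.card - 1 := Finset.card_erase_of_mem hzρ
        have hγK : ρ.erase z ∈ K.cells := K.down_closed ρ hρK _ (Finset.erase_subset _ _)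
          (Finset.card_pos.mp (by omega))
        have hγss : σ ⊂ ρ.erase z := ⟨hsubγ, fun h' => by
          have := Finset.card_le_card h'; omega⟩
        have hIH : f τ ≤ f (ρ.erase z) := IH (ρ.erase z).card (by omega) _ rfl hγK hγss
        exact Finset.mem_filter.mpr ⟨hγK, Finset.erase_ssubset hzρ, by omega,
          le_of_lt (lt_of_lt_of_le hlt hIH)⟩
      have hne : ρ.erase z₁ ≠ ρ.erase z₂ := by
        intro h
        have hz2 : z₂ ∈ ρ.erase z₁ :=
          Finset.mem_erase.mpr ⟨hz12.symm, (Finset.mem_sdiff.mp hz₂).1⟩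
        rw [h] at hz2
        exact (Finset.mem_erase.mp hz2).1 rfl
      have hL := (hf ρ hρK).2
      have : 1 < (Lset f K ρ).card :=
        Finset.one_lt_card.mpr ⟨_, key z₁ hz₁, _, key z₂ hz₂, hne⟩
      omega

/-- Main descent lemma: if there is no critical edge above level `a`, connectivity in a
higher sublevel complex descends to `subcx f K a`. -/
lemma subcx_conn_down {f : Finset V → ℝ} {K : SComplex V} (hf : IsDMF f K)
    (hinj : Set.InjOn f (K.cells : Set (Finset V))) {a : ℝ}
    (H : ∀ e ∈ K.cells, e.card = 2 → IsCriticalCell f K e → f e ≤ a) :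
    ∀ (n : ℕ) (c : ℝ), (K.cells.filter fun σ => a < f σ ∧ f σ ≤ c).card = n →
      ∀ u v : V, ({u} : Finset V) ∈ subcx f K a → ({v} : Finset V) ∈ subcx f K a →
        Relation.ReflTransGen (EStep (subcx f K c)) u v →
        Relation.ReflTransGen (EStep (subcx f K a)) u v := by
  intro n
  induction n using Nat.strong_induction_on with
  | _ n IH =>
    intro c hcard u v hu hv hconn'
    rcases Nat.eq_zero_or_pos n with hn0 | hnpos
    · -- base case: subcx c ⊆ subcx a
      have hsub : subcx f K c ⊆ subcx f K a := by
        intro σ hσ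
        obtain ⟨hσK, τ, hτK, hsubτ, hle⟩ := mem_subcx.mp hσ
        by_cases hτa : f τ ≤ a
        · exact mem_subcx.mpr ⟨hσK, τ, hτK, hsubτ, hτa⟩
        · exfalso
          have : τ ∈ K.cells.filter fun σ => a < f σ ∧ f σ ≤ c :=
            Finset.mem_filter.mpr ⟨hτK, not_le.mp hτa, hle⟩
          have := Finset.card_pos.mpr ⟨τ, this⟩
          omega
      have := conn_map (C := subcx f K c) (D := subcx f K a) id
        (fun x y hxy => Relation.ReflTransGen.single (hsub hxy)) hconn'
      simpa using this
    · -- inductive step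
      set S := K.cells.filter fun σ => a < f σ ∧ f σ ≤ c with hS
      have hSne : S.Nonempty := Finset.card_pos.mp (by omega)
      obtain ⟨τs, hτsS, hmax⟩ := S.exists_max_image f hSne
      obtain ⟨hτsK, halt, hlec⟩ := Finset.mem_filter.mp hτsS
      -- the previous level c'
      set T := insert a ((K.cells.filter fun σ => a < f σ ∧ f σ < f τs).image f) with hT
      have hTne : T.Nonempty := ⟨a, Finset.mem_insert_self _ _⟩
      set c' := T.max' hTne with hc'
      have hac' : a ≤ c' := Finset.le_max' _ _ (Finset.mem_insert_self _ _)
      have hα : ∀ σ ∈ K.cells, f σ < f τs → f σ ≤ c' := by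
        intro σ hσ hlt
        rcases le_or_gt (f σ) a with h | h
        · exact h.trans hac'
        · exact Finset.le_max' _ _ (Finset.mem_insert_of_mem
            (Finset.mem_image_of_mem f (Finset.mem_filter.mpr ⟨hσ, h, hlt⟩)))
      have hc'lt : c' < f τs := by
        apply (Finset.max'_lt_iff _ hTne).mpr
        intro b hb
        rcases Finset.mem_insert.mp hb with h | h
        · rwa [h]
        · obtain ⟨σ, hσ, rfl⟩ := Finset.mem_image.mp h
          exact (Finset.mem_filter.mp hσ).2.2
      -- step down from c to f τs
      have hstep1 : Relation.ReflTransGen (EStep (subcx f K (f τs))) u v := by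
        have := conn_map (C := subcx f K c) (D := subcx f K (f τs)) id
          (fun x y hxy => by
            obtain ⟨hK, τ, hτK, hsub, hle⟩ := mem_subcx.mp hxy
            refine Relation.ReflTransGen.single (mem_subcx.mpr ⟨hK, τ, hτK, hsub, ?_⟩)
            by_cases hτa : f τ ≤ a
            · exact hτa.trans (le_of_lt halt)
            · exact hmax τ (Finset.mem_filter.mpr ⟨hτK, not_le.mp hτa, hle⟩)) hconn'
        simpa using this
      -- characterization of cells of subcx (f τs) not in subcx c'
      have hnew : ∀ σ ∈ subcx f K (f τs), σ ∉ subcx f K c' → σ = τs ∨ σ ∈ Lset f K τs := by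
        intro σ hσ hσold
        obtain ⟨hσK, τ, hτK, hsubτ, hle⟩ := mem_subcx.mp hσ
        have hτc' : ¬ f τ ≤ c' := fun h => hσold (mem_subcx.mpr ⟨hσK, τ, hτK, hsubτ, h⟩)
        have hτeq : f τ = f τs := by
          rcases lt_or_eq_of_le hle with h | h
          · exact absurd (hα τ hτK h) hτc'
          · exact h
        have hττs : τ = τs := hinj hτK hτsK hτeq
        subst hττs
        by_cases hστ : σ = τ
        · exact Or.inl hστ
        · right
          have hss : σ ⊂ τ := ⟨hsubτ, fun h => hστ (le_antisymm hsubτ h)⟩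
          have hσne : σ.Nonempty := K.nonempty_of_mem σ hσK
          have key : ∀ z ∈ τ \ σ, τ.erase z ∈ Lset f K τ := by
            intro z hz
            obtain ⟨hzτ, hzσ⟩ := Finset.mem_sdiff.mp hz
            have hsubγ : σ ⊆ τ.erase z := Finset.subset_erase.mpr ⟨hsubτ, hzσ⟩
            have hγK : τ.erase z ∈ K.cells := K.down_closed τ hτK _
              (Finset.erase_subset _ _) (hσne.mono hsubγ)
            have hγf : ¬ f (τ.erase z) < f τ := by
              intro hlt
              exact hσold (mem_subcx.mpr ⟨hσK, _, hγK, hsubγ, hα _ hγK hlt⟩)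
            exact Finset.mem_filter.mpr ⟨hγK, Finset.erase_ssubset hzτ,
              by rw [Finset.card_erase_of_mem hzτ]
                 have := Finset.card_pos.mpr ⟨z, hzτ⟩; omega,
              not_lt.mp hγf⟩
          have hsdne : (τ \ σ).Nonempty := by
            rw [Finset.sdiff_nonempty]
            exact fun h => hστ (le_antisymm hsubτ h)
          obtain ⟨z₀, hz₀⟩ := hsdne
          have hσeq : σ = τ.erase z₀ := by
            apply le_antisymm
            · exact Finset.subset_erase.mpr ⟨hsubτ, (Finset.mem_sdiff.mp hz₀).2⟩
            · intro w hw
              obtain ⟨hwz, hwτ⟩ := Finset.mem_erase.mp hw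
              by_contra hwσ
              have h1 := key z₀ hz₀
              have h2 := key w (Finset.mem_sdiff.mpr ⟨hwτ, hwσ⟩)
              have hL := (hf τ hτsK).2
              have heq : τ.erase w = τ.erase z₀ := Finset.card_le_one.mp hL _ h2 _ h1
              have : z₀ ∈ τ.erase w :=
                Finset.mem_erase.mpr ⟨fun h => hwz h.symm, (Finset.mem_sdiff.mp hz₀).1⟩
              rw [heq] at this
              exact (Finset.mem_erase.mp this).1 rfl
          rw [hσeq]
          exact key z₀ hz₀
      -- the key connectivity descent to c'
      have hkey : Relation.ReflTransGen (EStep (subcx f K c')) u v := by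
        rcases (Lset f K τs).eq_empty_or_nonempty with hL | ⟨ρ, hρL⟩
        · by_cases hU : Uset f K τs = ∅
          · by_cases hc2 : τs.card = 2
            · exact absurd (H τs hτsK hc2 ⟨hτsK, hU, hL⟩) (not_le.mpr halt)
            · have := conn_map (C := subcx f K (f τs)) (D := subcx f K c') id
                (fun x y hxy => by
                  by_cases hold : ({x, y} : Finset V) ∈ subcx f K c'
                  · exact Relation.ReflTransGen.single hold
                  · rcases hnew _ hxy hold with heq | hmem
                    · by_cases hxyeq : x = y
                      · subst hxyeq; exact Relation.ReflTransGen.refl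
                      · exfalso
                        have : ({x, y} : Finset V).card = 2 := Finset.card_pair hxyeq
                        rw [heq] at this
                        exact hc2 this
                    · rw [hL] at hmem; exact absurd hmem (Finset.notMem_empty _)) hstep1
              simpa using this
          · obtain ⟨τp, hτp⟩ := Finset.nonempty_iff_ne_empty.mpr hU
            obtain ⟨hτpK, hτpss, _, hτple⟩ := Finset.mem_filter.mp hτp
            have hτplt : f τp < f τs := lt_of_le_of_ne hτple
              (fun h => (ne_of_lt (Finset.card_lt_card hτpss)).symm
                (congrArg Finset.card (hinj hτpK hτsK h)) )
            have hτpc' : f τp ≤ c' := hα _ hτpK hτplt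
            have := conn_map (C := subcx f K (f τs)) (D := subcx f K c') id
              (fun x y hxy => by
                by_cases hold : ({x, y} : Finset V) ∈ subcx f K c'
                · exact Relation.ReflTransGen.single hold
                · rcases hnew _ hxy hold with heq | hmem
                  · have hsub2 : ({x, y} : Finset V) ⊆ τp := by
                      rw [heq]; exact hτpss.subset
                    exact Relation.ReflTransGen.single (mem_subcx.mpr
                      ⟨(mem_subcx.mp hxy).1, τp, hτpK, hsub2, hτpc'⟩)
                  · rw [hL] at hmem; exact absurd hmem (Finset.notMem_empty _)) hstep1
            simpa using this
        · obtain ⟨hρK, hρss, hρcard, hρf⟩ := Finset.mem_filter.mp hρL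
          have hLone : (Lset f K τs).card ≤ 1 := (hf τs hτsK).2
          have hLeq : ∀ γ ∈ Lset f K τs, γ = ρ :=
            fun γ hγ => Finset.card_le_one.mp hLone _ hγ _ hρL
          have hρpos : 1 ≤ ρ.card := Finset.card_pos.mpr (K.nonempty_of_mem ρ hρK)
          by_cases h2 : τs.card = 2
          · -- τs is an edge paired with one of its vertices
            obtain ⟨xs, hxs⟩ := Finset.card_eq_one.mp (show ρ.card = 1 by omega)
            have hsd1 : (τs \ ρ).card = 1 := by
              rw [Finset.card_sdiff_of_subset hρss.subset]; omega
            obtain ⟨ys, hys⟩ := Finset.card_eq_one.mp hsd1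
            have hysmem : ys ∈ τs \ ρ := by rw [hys]; exact Finset.mem_singleton_self _
            obtain ⟨hysτ, hysρ⟩ := Finset.mem_sdiff.mp hysmem
            have hxsys : xs ≠ ys := fun h => hysρ (by rw [hxs, ← h]; exact Finset.mem_singleton_self _)
            have hxsτ : xs ∈ τs := hρss.subset (by rw [hxs]; exact Finset.mem_singleton_self _)
            have hτseq : τs = {xs, ys} := by
              symm
              apply Finset.eq_of_subset_of_card_le
              · intro w hw
                rcases Finset.mem_insert.mp hw with h | h
                · rw [h]; exact hxsτ
                · rw [Finset.mem_singleton.mp h]; exact hysτ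
              · rw [Finset.card_pair hxsys]; omega
            -- {xs} is not in subcx c'
            have hpair : τs ∈ Uset f K ({xs} : Finset V) := by
              refine Finset.mem_filter.mpr ⟨hτsK, ?_, by simp [h2], by rw [← hxs]; exact hρf⟩
              rw [← hxs]; exact hρss
            have hxs_new : ({xs} : Finset V) ∉ subcx f K c' := by
              intro hmem
              obtain ⟨_, ν, hνK, hsub, hνle⟩ := mem_subcx.mp hmem
              by_cases hνeq : ν = ({xs} : Finset V)
              · rw [hνeq, ← hxs] at hνle
                exact absurd hνle (not_le.mpr (lt_of_lt_of_le hc'lt hρf))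
              · have hss : ({xs} : Finset V) ⊂ ν := ⟨hsub, fun h => hνeq (le_antisymm h hsub)⟩
                have hxsK : ({xs} : Finset V) ∈ K.cells := by rw [← hxs]; exact hρK
                have := uset_min hf hxsK hpair ν hνK hss
                exact absurd hνle (not_le.mpr (lt_of_lt_of_le hc'lt this))
            set φ : V → V := fun x => if x = xs then ys else x with hφ
            have hφid : ∀ x, x ≠ xs → φ x = x := fun x hx => if_neg hx
            have hsteps : ∀ x y, EStep (subcx f K (f τs)) x y →
                Relation.ReflTransGen (EStep (subcx f K c')) (φ x) (φ y) := by
              intro x y hxy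
              by_cases hold : ({x, y} : Finset V) ∈ subcx f K c'
              · have hxne : x ≠ xs := fun h => hxs_new (subcx_down hold
                  (by rw [h]; intro w hw; rw [Finset.mem_singleton.mp hw]; exact Finset.mem_insert_self _ _)
                  (Finset.singleton_nonempty _))
                have hyne : y ≠ xs := fun h => hxs_new (subcx_down hold
                  (by rw [h]; intro w hw; rw [Finset.mem_singleton.mp hw]
                      exact Finset.mem_insert_of_mem (Finset.mem_singleton_self _))
                  (Finset.singleton_nonempty _))
                rw [hφid x hxne, hφid y hyne]
                exact Relation.ReflTransGen.single hold
              · rcases hnew _ hxy hold with heq | hmem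
                · -- {x,y} = τs = {xs, ys} : both map to ys
                  have hφx : φ x = ys := by
                    have hx : x ∈ ({xs, ys} : Finset V) := by
                      rw [← hτseq, ← heq]; exact Finset.mem_insert_self _ _
                    rcases Finset.mem_insert.mp hx with h | h
                    · rw [hφ]; simp [h]
                    · rw [Finset.mem_singleton.mp h, hφid ys (Ne.symm hxsys)]
                  have hφy : φ y = ys := by
                    have hy : y ∈ ({xs, ys} : Finset V) := by
                      rw [← hτseq, ← heq]
                      exact Finset.mem_insert_of_mem (Finset.mem_singleton_self _)
                    rcases Finset.mem_insert.mp hy with h | h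
                    · rw [hφ]; simp [h]
                    · rw [Finset.mem_singleton.mp h, hφid ys (Ne.symm hxsys)]
                  rw [hφx, hφy]
                · -- {x,y} ∈ Lset τs, so it is ρ = {xs}, hence x = y
                  have := hLeq _ hmem
                  rw [hxs] at this
                  have hx : x = xs := by
                    have : x ∈ ({xs} : Finset V) := by rw [← this]; exact Finset.mem_insert_self _ _
                    exact Finset.mem_singleton.mp this
                  have hy : y = xs := by
                    have : y ∈ ({xs} : Finset V) := by
                      rw [← this]; exact Finset.mem_insert_of_mem (Finset.mem_singleton_self _)
                    exact Finset.mem_singleton.mp this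
                  rw [hx, hy]
            have hres := conn_map (C := subcx f K (f τs)) (D := subcx f K c') φ hsteps hstep1
            have hune : u ≠ xs := fun h => hxs_new (by rw [← h]; exact subcx_mono hac' hu)
            have hvne : v ≠ xs := fun h => hxs_new (by rw [← h]; exact subcx_mono hac' hv)
            rwa [hφid u hune, hφid v hvne] at hres
          · by_cases h3 : τs.card = 3
            · -- τs is a triangle paired with one of its edges ρ = {r, s}; z the third vertex
              obtain ⟨r, s, hrs, hρeq⟩ := Finset.card_eq_two.mp (show ρ.card = 2 by omega)
              have hsd1 : (τs \ ρ).card = 1 := by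
                rw [Finset.card_sdiff_of_subset hρss.subset]; omega
              obtain ⟨z, hz⟩ := Finset.card_eq_one.mp hsd1
              have hzmem : z ∈ τs \ ρ := by rw [hz]; exact Finset.mem_singleton_self _
              obtain ⟨hzτ, hzρ⟩ := Finset.mem_sdiff.mp hzmem
              have hrτ : r ∈ τs := hρss.subset (by rw [hρeq]; exact Finset.mem_insert_self _ _)
              have hsτ : s ∈ τs := hρss.subset
                (by rw [hρeq]; exact Finset.mem_insert_of_mem (Finset.mem_singleton_self _))
              have hrz : r ≠ z := fun h => hzρ (by rw [hρeq, ← h]; exact Finset.mem_insert_self _ _)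
              have hsz : s ≠ z := fun h => hzρ
                (by rw [hρeq, ← h]; exact Finset.mem_insert_of_mem (Finset.mem_singleton_self _))
              have hedge : ∀ w ∈ τs, w ≠ z → ({w, z} : Finset V) ∈ subcx f K c' := by
                intro w hwτ hwz
                have hsubτ : ({w, z} : Finset V) ⊆ τs := by
                  intro t ht
                  rcases Finset.mem_insert.mp ht with h | h
                  · rw [h]; exact hwτ
                  · rw [Finset.mem_singleton.mp h]; exact hzτ
                have hK : ({w, z} : Finset V) ∈ K.cells :=
                  K.down_closed τs hτsK _ hsubτ ⟨w, Finset.mem_insert_self _ _⟩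
                have hcardwz : ({w, z} : Finset V).card = 2 := Finset.card_pair hwz
                have hflt : f ({w, z} : Finset V) < f τs := by
                  by_contra hge
                  have hmem : ({w, z} : Finset V) ∈ Lset f K τs := by
                    refine Finset.mem_filter.mpr ⟨hK, ⟨hsubτ, fun h' => ?_⟩, by omega, not_lt.mp hge⟩
                    have := Finset.card_le_card h'
                    omega
                  have : ({w, z} : Finset V) = ρ := hLeq _ hmem
                  exact hzρ (this ▸ Finset.mem_insert_of_mem (Finset.mem_singleton_self _))
                exact mem_subcx.mpr ⟨hK, _, hK, le_refl _, hα _ hK hflt⟩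
              have := conn_map (C := subcx f K (f τs)) (D := subcx f K c') id
                (fun x y hxy => by
                  by_cases hold : ({x, y} : Finset V) ∈ subcx f K c'
                  · exact Relation.ReflTransGen.single hold
                  · rcases hnew _ hxy hold with heq | hmem
                    · exfalso
                      have hle2 : ({x, y} : Finset V).card ≤ 2 := by
                        apply le_trans (Finset.card_insert_le _ _); simp
                      rw [heq] at hle2; omega
                    · have hxyρ : ({x, y} : Finset V) = ρ := hLeq _ hmem
                      have hx : x ∈ ρ := hxyρ ▸ Finset.mem_insert_self _ _
                      have hy : y ∈ ρ := hxyρ ▸ Finset.mem_insert_of_mem (Finset.mem_singleton_self _)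
                      have hxτ : x ∈ τs := hρss.subset hx
                      have hyτ : y ∈ τs := hρss.subset hy
                      have hxz : x ≠ z := fun h => hzρ (h ▸ hx)
                      have hyz : y ≠ z := fun h => hzρ (h ▸ hy)
                      have e1 : EStep (subcx f K c') x z := hedge x hxτ hxz
                      have e2 : EStep (subcx f K c') z y := by
                        have := hedge y hyτ hyz
                        unfold EStep
                        rwa [Finset.pair_comm]
                      exact (Relation.ReflTransGen.single e1).tail e2) hstep1
              simpa using this
            · -- τs.card ≥ 4 : no new edges or vertices at all
              have := conn_map (C := subcx f K (f τs)) (D := subcx f K c') id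
                (fun x y hxy => by
                  by_cases hold : ({x, y} : Finset V) ∈ subcx f K c'
                  · exact Relation.ReflTransGen.single hold
                  · exfalso
                    have hle2 : ({x, y} : Finset V).card ≤ 2 := by
                      apply le_trans (Finset.card_insert_le _ _); simp
                    rcases hnew _ hxy hold with heq | hmem
                    · rw [heq] at hle2; omega
                    · have := hLeq _ hmem
                      rw [this] at hle2; omega) hstep1
              simpa using this
      -- conclude by the inductive hypothesis at level c'
      have hfilter_eq : (K.cells.filter fun σ => a < f σ ∧ f σ ≤ c') =
          (K.cells.filter fun σ => a < f σ ∧ f σ ≤ c).erase τs := by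
        ext σ
        simp only [Finset.mem_filter, Finset.mem_erase]
        constructor
        · rintro ⟨hσK, hσa, hσc'⟩
          refine ⟨fun h => ?_, hσK, hσa, hσc'.trans (le_of_lt (lt_of_lt_of_le hc'lt hlec))⟩
          subst h; exact absurd hσc' (not_le.mpr hc'lt)
        · rintro ⟨hne, hσK, hσa, hσc⟩
          refine ⟨hσK, hσa, ?_⟩
          have hle : f σ ≤ f τs := hmax σ (Finset.mem_filter.mpr ⟨hσK, hσa, hσc⟩)
          have : f σ ≠ f τs := fun h => hne (hinj hσK hτsK h)
          exact hα σ hσK (lt_of_le_of_ne hle this)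
      have hcard' : (K.cells.filter fun σ => a < f σ ∧ f σ ≤ c').card = n - 1 := by
        rw [hfilter_eq, Finset.card_erase_of_mem hτsS, hcard]
      exact IH (n - 1) (by omega) c' hcard' u v hu hv hkey

end Stmt19Aux

theorem stmt19 (f : Finset V → ℝ) (K : SComplex V) (hf : IsDMF f K)
    (hinj : Set.InjOn f (K.cells : Set (Finset V))) (hconn : ConnectedIn K.cells)
    (v₁ : V) (h1 : IsCriticalCell f K ({v₁} : Finset V))
    (hnotmin : ∃ w : V, ({w} : Finset V) ∈ K.cells ∧ f ({w} : Finset V) < f ({v₁} : Finset V))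
    (hdisc : ¬ ConnectedIn (subcx f K (f ({v₁} : Finset V)))) :
    ∃ e ∈ K.cells, e.card = 2 ∧ IsCriticalCell f K e ∧ f ({v₁} : Finset V) < f e := by
  by_contra hno
  push_neg at hno
  apply hdisc
  intro u v hu hv
  have huK : ({u} : Finset V) ∈ K.cells := (Finset.mem_filter.mp hu).1
  have hvK : ({v} : Finset V) ∈ K.cells := (Finset.mem_filter.mp hv).1
  -- a path in K.cells
  obtain ⟨n, p, h0, hn, hp⟩ := hconn u v huK hvK
  have hconnK : Relation.ReflTransGen (EStep K.cells) u v := by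
    have := conn_of_path n p hp
    rwa [h0, hn] at this
  -- K.cells is a sublevel complex for large c
  have hKne : (K.cells.image f).Nonempty := ⟨f {u}, Finset.mem_image_of_mem f huK⟩
  set ctop := (K.cells.image f).max' hKne with hctop
  have hconntop : Relation.ReflTransGen (EStep (subcx f K ctop)) u v := by
    have := conn_map (C := K.cells) (D := subcx f K ctop) id
      (fun x y hxy => Relation.ReflTransGen.single (mem_subcx.mpr
        ⟨hxy, _, hxy, fun _ ht => ht, Finset.le_max' _ _ (Finset.mem_image_of_mem f hxy)⟩)) hconnK
    simpa using this
  -- descend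
  have hmain := subcx_conn_down hf hinj
    (a := f ({v₁} : Finset V))
    (fun e he hcard hcrit => hno e he hcard hcrit)
    _ ctop rfl u v hu hv hconntop
  obtain ⟨m, q, hq0, hqm, hq⟩ := path_of_conn hmain
  exact ⟨m, q, hq0, hqm, hq⟩
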